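/- Let G be a group whose commutator subgroup G' = [G,G] is finite of cardinality k (with k ≥ 1). Then the index of the centralizer C_G(G') of G' in G is at most k^(k−1). -/
import Mathlib

theorem index_centralizer_commutator_le (G : Type*) [Group G] (k : ℕ) (hk : 1 ≤ k)
    (hfin : Finite (commutator G)) (hcard : Nat.card (commutator G) = k) :
    Cardinal.mk (G ⧸ Subgroup.centralizer (commutator G : Set G)) ≤ (k : Cardinal) ^ (k - 1) := by
  classical
  set H := commutator G with hH
  have hnorm : H.Normal := inferInstance
  set T := {x : H // (x : G) ≠ 1} with hT
  -- conjugation map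
  set φ : G → (T → H) := fun g x =>
    ⟨g * (x : H) * g⁻¹, hnorm.conj_mem _ x.1.2 g⟩ with hφ
  have hresp : ∀ g₁ g₂ : G, g₁⁻¹ * g₂ ∈ Subgroup.centralizer (H : Set G) → φ g₁ = φ g₂ := by
    intro g₁ g₂ hc
    funext x
    apply Subtype.ext
    show g₁ * (x : H) * g₁⁻¹ = g₂ * (x : H) * g₂⁻¹
    rw [Subgroup.mem_centralizer_iff] at hc
    have := hc (x : H) x.1.2
    calc g₁ * (x : H) * g₁⁻¹ = g₁ * ((x : G) * (g₁⁻¹ * g₂)) * g₂⁻¹ := by group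
    _ = g₁ * ((g₁⁻¹ * g₂) * (x : G)) * g₂⁻¹ := by rw [this]
    _ = g₂ * (x : H) * g₂⁻¹ := by group
  let F : G ⧸ Subgroup.centralizer (H : Set G) → (T → H) :=
    Quotient.lift φ (fun g₁ g₂ h => hresp g₁ g₂ ((QuotientGroup.leftRel_apply).mp h))
  have hinj : Function.Injective F := by
    intro q₁ q₂
    induction q₁ using Quotient.inductionOn with | _ g₁ =>
    induction q₂ using Quotient.inductionOn with | _ g₂ =>
    intro h
    have h' : φ g₁ = φ g₂ := h
    refine Quotient.sound ((QuotientGroup.leftRel_apply).mpr ?_)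
    rw [Subgroup.mem_centralizer_iff]
    intro m hm
    by_cases hm1 : m = 1
    · simp [hm1]
    · have h2 : g₁ * m * g₁⁻¹ = g₂ * m * g₂⁻¹ :=
        congrArg Subtype.val (congrFun h' ⟨⟨m, hm⟩, hm1⟩)
      calc m * (g₁⁻¹ * g₂) = g₁⁻¹ * (g₁ * m * g₁⁻¹) * g₂ := by group
      _ = g₁⁻¹ * (g₂ * m * g₂⁻¹) * g₂ := by rw [h2]
      _ = (g₁⁻¹ * g₂) * m := by group
  have hle := Cardinal.mk_le_of_injective hinj
  have hmkH : Cardinal.mk H = (k : Cardinal) := by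
    rw [← hcard]
    exact (Cardinal.cast_toNat_of_lt_aleph0 (Cardinal.lt_aleph0_of_finite H)).symm
  have hcardT : Nat.card T = k - 1 := by
    have : Fintype H := Fintype.ofFinite H
    rw [Nat.card_eq_fintype_card]
    have h1 : Fintype.card {x : H // (x : G) = 1} = 1 := by
      refine Fintype.card_eq_one_iff.mpr ⟨⟨1, rfl⟩, ?_⟩
      intro y
      exact Subtype.ext (Subtype.ext y.2)
    have := Fintype.card_subtype_compl (fun x : H => (x : G) = 1)
    rw [h1] at this
    have hTc : Fintype.card T = Fintype.card H - 1 := this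
    rw [hTc, ← Nat.card_eq_fintype_card, hcard]
  have hmkT : Cardinal.mk T = ((k - 1 : ℕ) : Cardinal) := by
    rw [← hcardT]
    exact (Cardinal.cast_toNat_of_lt_aleph0 (Cardinal.lt_aleph0_of_finite T)).symm
  calc Cardinal.mk (G ⧸ Subgroup.centralizer (H : Set G)) ≤ Cardinal.mk (T → H) := hle
  _ = Cardinal.mk H ^ Cardinal.mk T := Cardinal.power_def H T ▸ rfl
  _ = (k : Cardinal) ^ ((k - 1 : ℕ) : Cardinal) := by rw [hmkH, hmkT]
  _ = (k : Cardinal) ^ (k - 1) := Cardinal.power_natCast _ _
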